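/- arXiv:1505.02478 — 5 statements merged into one kernel-verified Lean document; each statement's English description precedes it below -/
import Mathlib

section
/- There is no Borel measurable positivity set in the Cantor space X = {-2,-1,0,1,2}^ℕ, where a positivity set S ⊆ X satisfies: (i) if x + y = z (coordinatewise, with the sum landing in X) and x, y ∈ S then z ∈ S; (ii) if x + y = z and x, y ∉ S then z ∉ S; (iii) if x ∈ X is eventually zero and has a nonzero term, then x ∈ S if and only if the last nonzero term of x is positive. -/
/-- `x` takes values in `{-2,-1,0,1,2}`. -/
def inX (x : ℕ → ℤ) : Prop := ∀ n, x n = -2 ∨ x n = -1 ∨ x n = 0 ∨ x n = 1 ∨ x n = 2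

/-- `x` is eventually zero. -/
def EventuallyZeroSeq (x : ℕ → ℤ) : Prop := ∃ N, ∀ n, N < n → x n = 0

/-- the last nonzero term of `x` is positive. -/
def LastNonzeroPos (x : ℕ → ℤ) : Prop := ∃ n, 0 < x n ∧ ∀ m, n < m → x m = 0

/-- A positivity set in the Cantor space `{-2,-1,0,1,2}^ℕ`. -/
def IsPositivitySet (S : Set (ℕ → ℤ)) : Prop :=
  S ⊆ {x | inX x} ∧
  (∀ x y, inX x → inX y → inX (x + y) → x ∈ S → y ∈ S → x + y ∈ S) ∧
  (∀ x y, inX x → inX y → inX (x + y) → x ∉ S → y ∉ S → x + y ∉ S) ∧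
  (∀ x, inX x → (∃ n, x n ≠ 0) → EventuallyZeroSeq x → (x ∈ S ↔ LastNonzeroPos x))

/-! ### Auxiliary definitions -/

/-- Embed `{0,1}^ℕ` into `{-1,1}^ℕ ⊆ X`. -/
def bToZ (b : ℕ → Bool) : ℕ → ℤ := fun n => if b n then 1 else -1

/-- Flip all coordinates after position `N`. -/
def flipA (N : ℕ) (b : ℕ → Bool) : ℕ → Bool := fun n => if n ≤ N then b n else !b n

lemma flipA_invol (N : ℕ) : Function.Involutive (flipA N) := by
  intro b; funext n
  by_cases h : n ≤ N <;> simp [flipA, h]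

lemma flipA_cont (N : ℕ) : Continuous (flipA N) := by
  refine continuous_pi fun n => ?_
  by_cases h : n ≤ N <;> simp only [flipA, h, if_true, if_false]
  · exact continuous_apply n
  · exact (continuous_of_discreteTopology (f := fun v : Bool => !v)).comp (continuous_apply n)

/-- `flipA N` as a homeomorphism. -/
def flipH (N : ℕ) : (ℕ → Bool) ≃ₜ (ℕ → Bool) where
  toFun := flipA N
  invFun := flipA N
  left_inv := flipA_invol N
  right_inv := flipA_invol N
  continuous_toFun := flipA_cont N
  continuous_invFun := flipA_cont N

lemma inX_bToZ (b : ℕ → Bool) : inX (bToZ b) := by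
  intro n; cases h : b n <;> simp [bToZ, h]

lemma cylinder_isOpen (N : ℕ) (c : ℕ → Bool) :
    IsOpen {b : ℕ → Bool | ∀ i ≤ N, b i = c i} := by
  have : {b : ℕ → Bool | ∀ i ≤ N, b i = c i}
      = ⋂ i ∈ Finset.range (N + 1), ((fun b : ℕ → Bool => b i) ⁻¹' ({c i} : Set Bool)) := by
    ext b
    simp [Nat.lt_succ_iff]
  rw [this]
  refine isOpen_biInter_finset fun i _ => ?_
  have hcont : Continuous fun b : ℕ → Bool => b i := continuous_apply i
  exact hcont.isOpen_preimage _ (isOpen_discrete _)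

/-- Key Baire-category lemma: if `T` is comeager in the cylinder determined by `c` on
coordinates `≤ N`, then some `b` in that cylinder has both `b ∈ T` and `flipA N b ∈ T`. -/
lemma exists_pair (N : ℕ) (c : ℕ → Bool) (T : Set (ℕ → Bool))
    (hT : IsMeagre ({b : ℕ → Bool | ∀ i ≤ N, b i = c i} \ T)) :
    ∃ b : ℕ → Bool, (∀ i ≤ N, b i = c i) ∧ b ∈ T ∧ flipA N b ∈ T := by
  set D : Set (ℕ → Bool) := {b | ∀ i ≤ N, b i = c i} with hD
  have hM2 : IsMeagre (flipA N ⁻¹' (D \ T)) :=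
    hT.preimage_of_isOpenMap (flipA_cont N) (flipH N).isOpenMap
  have hM : IsMeagre ((D \ T) ∪ flipA N ⁻¹' (D \ T)) := by
    rw [IsMeagre, Set.compl_union]
    exact Filter.inter_mem hT hM2
  have hdense : Dense (((D \ T) ∪ flipA N ⁻¹' (D \ T))ᶜ) := dense_of_mem_residual hM
  have hDo : IsOpen D := cylinder_isOpen N c
  have hDne : D.Nonempty := ⟨c, fun i _ => rfl⟩
  obtain ⟨b, hbD, hb⟩ := hdense.inter_open_nonempty D hDo hDne
  rw [Set.mem_compl_iff, Set.mem_union] at hb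
  push_neg at hb
  have hbT : b ∈ T := by
    by_contra h
    exact hb.1 ⟨hbD, h⟩
  have hfD : flipA N b ∈ D := by
    intro i hi
    have : flipA N b i = b i := if_pos hi
    rw [this]
    exact hbD i hi
  have hfT : flipA N b ∈ T := by
    by_contra h
    exact hb.2 ⟨hfD, h⟩
  exact ⟨b, hbD, hbT, hfT⟩

lemma sum_eq (N : ℕ) (b : ℕ → Bool) (n : ℕ) :
    (bToZ b + bToZ (flipA N b)) n = if n ≤ N then 2 * bToZ b n else 0 := by
  by_cases h : n ≤ N
  · simp only [Pi.add_apply, bToZ, flipA, h, if_true]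
    ring
  · simp only [Pi.add_apply, bToZ, flipA, h, if_false]
    cases b n <;> simp

lemma inX_sum (N : ℕ) (b : ℕ → Bool) : inX (bToZ b + bToZ (flipA N b)) := by
  intro n
  rw [sum_eq]
  by_cases h : n ≤ N <;> simp only [h, if_true, if_false, bToZ] <;> cases b n <;> simp

lemma evZero_sum (N : ℕ) (b : ℕ → Bool) :
    EventuallyZeroSeq (bToZ b + bToZ (flipA N b)) := by
  refine ⟨N, fun n hn => ?_⟩
  rw [sum_eq, if_neg (by omega)]

/-- There is no Borel measurable positivity set in `{-2,-1,0,1,2}^ℕ`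
(with the Borel σ-algebra of the product topology on `ℕ → ℤ`). -/
theorem no_borel_positivity_set (S : Set (ℕ → ℤ)) (hS : IsPositivitySet S) :
    ¬ @MeasurableSet (ℕ → ℤ) (borel (ℕ → ℤ)) S := by
  rw [← BorelSpace.measurable_eq (α := ℕ → ℤ)]
  intro hmeas
  obtain ⟨hsub, hpos, hneg, hlast⟩ := hS
  have hfc : Continuous bToZ := continuous_pi fun n =>
    (continuous_of_discreteTopology (f := fun v : Bool => if v then (1 : ℤ) else -1)).comp
      (continuous_apply n)
  have hB : MeasurableSet (bToZ ⁻¹' S) := hmeas.preimage hfc.measurable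
  obtain ⟨U, hUo, hUeq⟩ := hB.baireMeasurableSet.residualEq_isOpen
  have hres : {x : ℕ → Bool | x ∈ bToZ ⁻¹' S ↔ x ∈ U} ∈ residual (ℕ → Bool) :=
    Filter.eventuallyEq_set.mp hUeq
  have hUB : IsMeagre (U \ bToZ ⁻¹' S) := by
    rw [IsMeagre]
    refine Filter.mem_of_superset hres fun x hx => ?_
    simp only [Set.mem_compl_iff, Set.mem_diff, not_and, not_not]
    exact fun hxU => hx.mpr hxU
  have hBU : IsMeagre (bToZ ⁻¹' S \ U) := by
    rw [IsMeagre]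
    refine Filter.mem_of_superset hres fun x hx => ?_
    simp only [Set.mem_compl_iff, Set.mem_diff, not_and, not_not]
    exact fun hxB => hx.mp hxB
  rcases U.eq_empty_or_nonempty with hU | ⟨c, hcU⟩
  · -- `U = ∅` : the preimage of `S` is meager; find `b` with `b 0 = true`,
    -- `bToZ b ∉ S` and `bToZ (flipA 0 b) ∉ S`.
    have hBmeag : IsMeagre (bToZ ⁻¹' S) := by
      rw [hU] at hBU
      simpa using hBU
    have hT : IsMeagre ({b : ℕ → Bool | ∀ i ≤ 0, b i = (fun _ => true) i} \ (bToZ ⁻¹' S)ᶜ) := by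
      refine hBmeag.mono fun b hb => ?_
      exact not_not.mp hb.2
    obtain ⟨b, hbD, hbT, hfT⟩ := exists_pair 0 (fun _ => true) _ hT
    have hb0 : b 0 = true := hbD 0 le_rfl
    set z := bToZ b + bToZ (flipA 0 b) with hz
    have hznot : z ∉ S :=
      hneg _ _ (inX_bToZ b) (inX_bToZ _) (inX_sum 0 b) hbT hfT
    have hz0 : z 0 = 2 := by
      rw [hz, sum_eq, if_pos le_rfl, bToZ, hb0]
      norm_num
    have hzS : z ∈ S := by
      refine (hlast z (inX_sum 0 b) ⟨0, by rw [hz0]; norm_num⟩ (evZero_sum 0 b)).mpr ?_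
      refine ⟨0, by rw [hz0]; norm_num, fun m hm => ?_⟩
      rw [hz, sum_eq, if_neg (by omega)]
    exact hznot hzS
  · -- `U` nonempty : the preimage of `S` is comeager in some cylinder,
    -- which we may take to end in `false`.
    rw [isOpen_pi_iff] at hUo
    obtain ⟨I, u, hu, hsub'⟩ := hUo c hcU
    set N : ℕ := I.sup id + 1 with hN
    set c' : ℕ → Bool := Function.update c N false with hc'
    have hDU : {b : ℕ → Bool | ∀ i ≤ N, b i = c' i} ⊆ U := by
      intro b hb
      apply hsub'
      intro a ha
      have haN : a < N := Nat.lt_succ_of_le (Finset.le_sup (f := id) ha)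
      have hba : b a = c a := by
        have h1 := hb a haN.le
        rwa [hc', Function.update_of_ne haN.ne] at h1
      rw [hba]
      exact (hu a ha).2
    have hT : IsMeagre ({b : ℕ → Bool | ∀ i ≤ N, b i = c' i} \ bToZ ⁻¹' S) :=
      hUB.mono (s := U \ bToZ ⁻¹' S) fun b hb => ⟨hDU hb.1, hb.2⟩
    obtain ⟨b, hbD, hbT, hfT⟩ := exists_pair N c' _ hT
    have hbN : b N = false := by
      rw [hbD N le_rfl, hc', Function.update_self]
    set z := bToZ b + bToZ (flipA N b) with hz
    have hzS : z ∈ S :=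
      hpos _ _ (inX_bToZ b) (inX_bToZ _) (inX_sum N b) hbT hfT
    have hzN : z N = -2 := by
      rw [hz, sum_eq, if_pos le_rfl, bToZ, hbN]
      norm_num
    obtain ⟨n, hn, hlastn⟩ :=
      (hlast z (inX_sum N b) ⟨N, by rw [hzN]; norm_num⟩ (evZero_sum N b)).mp hzS
    rcases lt_trichotomy n N with h | h | h
    · have := hlastn N h
      rw [hzN] at this
      norm_num at this
    · rw [h, hzN] at hn
      norm_num at hn
    · have : z n = 0 := by rw [hz, sum_eq, if_neg (by omega)]
      rw [this] at hn
      norm_num at hn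
end

section
/- If S ⊆ {-2,-1,0,1,2}^ℕ is a positivity set, then the set S' = S ∩ {-1,0,1}^ℕ does not have the Baire property in the Cantor space {-1,0,1}^ℕ. -/
/-- The Cantor space `{-1,0,1}^ℕ`, as a subspace of the product space `ℕ → ℤ`. -/
def Y : Type := {x : ℕ → ℤ // ∀ n, x n = -1 ∨ x n = 0 ∨ x n = 1}

instance : TopologicalSpace Y := instTopologicalSpaceSubtype

open Set

/-! ### Baire structure on `Y` -/

lemma Yset_closed : IsClosed {x : ℕ → ℤ | ∀ n, x n = -1 ∨ x n = 0 ∨ x n = 1} := by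
  have h : {x : ℕ → ℤ | ∀ n, x n = -1 ∨ x n = 0 ∨ x n = 1}
      = ⋂ n, (fun x : ℕ → ℤ => x n) ⁻¹' {-1, 0, 1} := by
    ext x
    simp [Set.mem_iInter]
  rw [h]
  exact isClosed_iInter fun n => (isClosed_discrete _).preimage (continuous_apply n)

instance : PolishSpace Y := Yset_closed.polishSpace

instance : BaireSpace Y := by
  infer_instance

instance : Nonempty Y := ⟨⟨fun _ => 0, fun n => Or.inr (Or.inl rfl)⟩⟩

lemma not_meagre_open {V : Set Y} (hV : IsOpen V) (hne : V.Nonempty) : ¬ IsMeagre V := by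
  intro h
  obtain ⟨x, hxV, hxc⟩ := (dense_of_mem_residual h).inter_open_nonempty V hV hne
  exact hxc hxV

lemma meagre_preimage (e : Y ≃ₜ Y) {A : Set Y} (h : IsMeagre A) : IsMeagre (e ⁻¹' A) :=
  h.preimage_of_isOpenMap e.continuous e.isOpenMap

lemma meagre_union {A B : Set Y} (hA : IsMeagre A) (hB : IsMeagre B) : IsMeagre (A ∪ B) := by
  rw [IsMeagre, Set.compl_union]
  exact Filter.inter_mem hA hB

/-! ### Cylinders -/

def Cyl (p : ℕ → ℤ) (L : ℕ) : Set Y := {x | ∀ i, i < L → x.val i = p i}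

def Fmap (L : ℕ) : Y → (Fin L → ℤ) := fun x i => x.val i

lemma continuous_Fmap (L : ℕ) : Continuous (Fmap L) :=
  continuous_pi fun i => (continuous_apply (i : ℕ)).comp continuous_subtype_val

lemma Cyl_eq (p : ℕ → ℤ) (L : ℕ) :
    Cyl p L = Fmap L ⁻¹' {fun i : Fin L => p i} := by
  ext x
  constructor
  · intro h; funext i; exact h i i.isLt
  · intro h i hi; exact congrFun h ⟨i, hi⟩

lemma Cyl_clopen (p : ℕ → ℤ) (L : ℕ) : IsClopen (Cyl p L) := by
  rw [Cyl_eq]; exact (isClopen_discrete _).preimage (continuous_Fmap L)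

lemma Cyl_nonempty (p : ℕ → ℤ) (L : ℕ) (hp : ∀ i, i < L → (p i = -1 ∨ p i = 0 ∨ p i = 1)) :
    (Cyl p L).Nonempty := by
  refine ⟨⟨fun i => if i < L then p i else 0, ?_⟩, ?_⟩
  · intro n
    by_cases h : n < L
    · simpa [h] using hp n h
    · simp [h]
  · intro i hi
    simp [hi]

lemma open_contains_cyl {V : Set Y} (hV : IsOpen V) {y : Y} (hy : y ∈ V) :
    ∃ L, Cyl y.val L ⊆ V := by
  replace hV := isOpen_induced_iff.mp hV
  obtain ⟨V₀, hV₀, rfl⟩ := hV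
  obtain ⟨I, u, h1, h2⟩ := isOpen_pi_iff.mp hV₀ y.val hy
  refine ⟨I.sup id + 1, fun x hx => ?_⟩
  refine h2 (fun i hi => ?_)
  have hiL : i < I.sup id + 1 := Nat.lt_succ_of_le (Finset.le_sup (f := id) hi)
  rw [hx i hiL]
  exact (h1 i hi).2

/-! ### Facts about positivity sets -/

lemma inX_of_Y (x : Y) : inX x.val := by
  intro n
  have := x.2 n
  omega

lemma lastpos_mem {S : Set (ℕ → ℤ)} (hS : IsPositivitySet S) {z : ℕ → ℤ} (hz : inX z)
    {k : ℕ} (hk : 0 < z k) (hk2 : ∀ m, k < m → z m = 0) : z ∈ S :=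
  (hS.2.2.2 z hz ⟨k, by omega⟩ ⟨k, hk2⟩).mpr ⟨k, hk, hk2⟩

lemma lastneg_not_mem {S : Set (ℕ → ℤ)} (hS : IsPositivitySet S) {z : ℕ → ℤ} (hz : inX z)
    {k : ℕ} (hk : z k < 0) (hk2 : ∀ m, k < m → z m = 0) : z ∉ S := by
  intro hmem
  obtain ⟨j, hj, hj2⟩ := (hS.2.2.2 z hz ⟨k, by omega⟩ ⟨k, hk2⟩).mp hmem
  rcases Nat.lt_trichotomy j k with h | h | h
  · have h0 := hj2 k h; omega
  · subst h; omega
  · have h0 := hk2 j h; omega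

/-! ### Coordinatewise involutions -/

def cmap (g : ℕ → ℤ → ℤ)
    (hg : ∀ i t, (t = -1 ∨ t = 0 ∨ t = 1) → (g i t = -1 ∨ g i t = 0 ∨ g i t = 1)) :
    Y → Y := fun x => ⟨fun i => g i (x.val i), fun i => hg i _ (x.2 i)⟩

lemma continuous_cmap (g : ℕ → ℤ → ℤ) (hg) : Continuous (cmap g hg) := by
  refine Continuous.subtype_mk (continuous_pi fun i => ?_) _
  exact (continuous_of_discreteTopology (f := g i)).comp
    ((continuous_apply i).comp continuous_subtype_val)

def mkInv (G : Y → Y) (hc : Continuous G) (hi : ∀ x, G (G x) = x) : Y ≃ₜ Y :=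
  ⟨⟨G, G, hi, hi⟩, hc, hc⟩

def rfun (n : ℕ) : ℕ → ℤ → ℤ := fun i t => if i = n then (if t = 1 then 1 else -1 - t) else -t

lemma rfun_range : ∀ i t, (t = -1 ∨ t = 0 ∨ t = 1) →
    (rfun n i t = -1 ∨ rfun n i t = 0 ∨ rfun n i t = 1) := by
  intro i t ht
  unfold rfun
  split
  · split <;> omega
  · omega

def rmap (n : ℕ) : Y → Y := cmap (rfun n) rfun_range

lemma rmap_invol (n : ℕ) (x : Y) : rmap n (rmap n x) = x := by
  apply Subtype.ext
  funext i
  have := x.2 i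
  show rfun n i (rfun n i (x.val i)) = x.val i
  unfold rfun
  by_cases h : i = n
  · subst h
    rcases this with h' | h' | h' <;> simp [h']
  · simp [h]

def sfun (n : ℕ) : ℕ → ℤ → ℤ := fun i t => if i = n then (if t = -1 then -1 else 1 - t) else -t

lemma sfun_range : ∀ i t, (t = -1 ∨ t = 0 ∨ t = 1) →
    (sfun n i t = -1 ∨ sfun n i t = 0 ∨ sfun n i t = 1) := by
  intro i t ht
  unfold sfun
  split
  · split <;> omega
  · omega

def smap (n : ℕ) : Y → Y := cmap (sfun n) sfun_range

lemma smap_invol (n : ℕ) (x : Y) : smap n (smap n x) = x := by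
  apply Subtype.ext
  funext i
  have := x.2 i
  show sfun n i (sfun n i (x.val i)) = x.val i
  unfold sfun
  by_cases h : i = n
  · subst h
    rcases this with h' | h' | h' <;> simp [h']
  · simp [h]

lemma rmap_sum (n : ℕ) (x : Y) (hx : x.val n ≠ 1) :
    x.val + (rmap n x).val = fun i => if i = n then (-1 : ℤ) else 0 := by
  funext i
  have hxi := x.2 i
  show x.val i + rfun n i (x.val i) = if i = n then (-1 : ℤ) else 0
  unfold rfun
  by_cases h : i = n
  · subst h
    rw [if_pos (rfl : i = i), if_pos (rfl : i = i)]
    split <;> omega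
  · simp [h]

lemma smap_sum (n : ℕ) (x : Y) (hx : x.val n ≠ -1) :
    x.val + (smap n x).val = fun i => if i = n then (1 : ℤ) else 0 := by
  funext i
  have hxi := x.2 i
  show x.val i + sfun n i (x.val i) = if i = n then (1 : ℤ) else 0
  unfold sfun
  by_cases h : i = n
  · subst h
    rw [if_pos (rfl : i = i), if_pos (rfl : i = i)]
    split <;> omega
  · simp [h]

/-! ### Prefix swap homeomorphism -/

def substPre (q : ℕ → ℤ) (L : ℕ) (hq : ∀ i, q i = -1 ∨ q i = 0 ∨ q i = 1) (x : Y) : Y :=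
  ⟨fun i => if i < L then q i else x.val i, fun i => by
    by_cases h : i < L
    · simpa [h] using hq i
    · simpa [h] using x.2 i⟩

lemma continuous_substPre (q L hq) : Continuous (substPre q L hq) := by
  refine Continuous.subtype_mk (continuous_pi fun i => ?_) _
  by_cases h : i < L
  · simpa [h] using continuous_const
  · simp only [h, if_false, ↓reduceIte]
    exact (continuous_apply i).comp continuous_subtype_val

open Classical in
noncomputable def prefSwap (c v : ℕ → ℤ) (L : ℕ) (hc : ∀ i, c i = -1 ∨ c i = 0 ∨ c i = 1)
    (hv : ∀ i, v i = -1 ∨ v i = 0 ∨ v i = 1) : Y → Y := fun x =>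
  if x ∈ Cyl c L then substPre v L hv x
  else if x ∈ Cyl v L then substPre c L hc x
  else x

lemma prefSwap_of_mem (c v L hc hv) (x : Y) (hx : x ∈ Cyl c L) :
    prefSwap c v L hc hv x = substPre v L hv x := by
  rw [prefSwap, if_pos hx]

lemma prefSwap_of_mem' (c v L hc hv) (x : Y) (hx : x ∉ Cyl c L) (hx' : x ∈ Cyl v L) :
    prefSwap c v L hc hv x = substPre c L hc x := by
  rw [prefSwap, if_neg hx, if_pos hx']

lemma prefSwap_of_not (c v L hc hv) (x : Y) (hx : x ∉ Cyl c L) (hx' : x ∉ Cyl v L) :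
    prefSwap c v L hc hv x = x := by
  rw [prefSwap, if_neg hx, if_neg hx']

lemma continuous_prefSwap (c v L hc hv) : Continuous (prefSwap c v L hc hv) := by
  classical
  have h1 : frontier {x : Y | x ∈ Cyl c L} = ∅ := (Cyl_clopen c L).frontier_eq
  have h2 : frontier {x : Y | x ∈ Cyl v L} = ∅ := (Cyl_clopen v L).frontier_eq
  have key : Continuous (fun x : Y =>
      if x ∈ Cyl c L then substPre v L hv x
      else if x ∈ Cyl v L then substPre c L hc x
      else x) := by
    refine Continuous.if ?_ (continuous_substPre v L hv)
      (Continuous.if ?_ (continuous_substPre c L hc) continuous_id)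
    · intro a ha; rw [h1] at ha; exact absurd ha (notMem_empty a)
    · intro a ha; rw [h2] at ha; exact absurd ha (notMem_empty a)
  exact key

lemma substPre_mem_Cyl (q L hq x) : substPre q L hq x ∈ Cyl q L := by
  intro i hi
  simp [substPre, hi]

lemma prefSwap_invol (c v L hc hv) (hne : ¬ ∀ i, i < L → v i = c i) (x : Y) :
    prefSwap c v L hc hv (prefSwap c v L hc hv x) = x := by
  have hvc : ∀ y : Y, y ∈ Cyl v L → y ∉ Cyl c L := by
    intro y hyv hyc
    exact hne fun i hi => by rw [← hyv i hi, hyc i hi]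
  by_cases h1 : x ∈ Cyl c L
  · rw [prefSwap_of_mem c v L hc hv x h1]
    have h2 : substPre v L hv x ∈ Cyl v L := substPre_mem_Cyl v L hv x
    rw [prefSwap_of_mem' c v L hc hv _ (hvc _ h2) h2]
    apply Subtype.ext; funext i
    show (if i < L then c i else (substPre v L hv x).val i) = x.val i
    by_cases h : i < L
    · simp [h, h1 i h]
    · simp [substPre, h]
  · by_cases h2 : x ∈ Cyl v L
    · rw [prefSwap_of_mem' c v L hc hv x h1 h2]
      have h3 : substPre c L hc x ∈ Cyl c L := substPre_mem_Cyl c L hc x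
      rw [prefSwap_of_mem c v L hc hv _ h3]
      apply Subtype.ext; funext i
      show (if i < L then v i else (substPre c L hc x).val i) = x.val i
      by_cases h : i < L
      · simp [h, h2 i h]
      · simp [substPre, h]
    · rw [prefSwap_of_not c v L hc hv x h1 h2, prefSwap_of_not c v L hc hv x h1 h2]

/-! ### Flipping between comeager and meager regions -/

lemma flip_comeager {S : Set (ℕ → ℤ)} (hS : IsPositivitySet S) {W : Set Y} (hW : IsOpen W)
    (hne : W.Nonempty) (hm : IsMeagre (W \ {y : Y | y.val ∈ S})) :
    ∃ V : Set Y, IsOpen V ∧ V.Nonempty ∧ IsMeagre (V ∩ {y : Y | y.val ∈ S}) := by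
  obtain ⟨y, hy⟩ := hne
  obtain ⟨n, hcyl⟩ := open_contains_cyl hW hy
  set u := y.val with hu
  let e : Y ≃ₜ Y := mkInv (rmap n) (continuous_cmap _ _) (rmap_invol n)
  have einv : ∀ z : Y, e (e z) = z := rmap_invol n
  set D : Set Y := Cyl u n ∩ {x : Y | x.val n ≠ 1} with hD
  have hDopen : IsOpen D := by
    refine (Cyl_clopen u n).isOpen.inter ?_
    have : ({x : Y | x.val n ≠ 1}) = (fun x : Y => x.val n) ⁻¹' {t : ℤ | t ≠ 1} := rfl
    rw [this]
    exact (isOpen_discrete _).preimage ((continuous_apply n).comp continuous_subtype_val)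
  have hDne : D.Nonempty := by
    refine ⟨⟨fun i => if i < n then u i else -1, ?_⟩, ?_, ?_⟩
    · intro k
      by_cases h : k < n
      · simpa [h] using y.2 k
      · simp [h]
    · intro i hi
      simp [hi]
    · show (if n < n then u n else -1) ≠ 1
      simp
  refine ⟨e ⁻¹' D, hDopen.preimage e.continuous, ?_, ?_⟩
  · obtain ⟨d, hd⟩ := hDne
    exact ⟨e d, by simpa [Set.mem_preimage, einv d] using hd⟩
  · have key : e ⁻¹' ((e ⁻¹' D) ∩ {y : Y | y.val ∈ S}) ⊆ W \ {y : Y | y.val ∈ S} := by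
      intro x hx
      obtain ⟨hx1, hx2⟩ := hx
      have hxD : x ∈ D := by
        rw [Set.mem_preimage] at hx1
        rwa [einv x] at hx1
      refine ⟨hcyl hxD.1, ?_⟩
      intro hxS
      have hsum : x.val + (rmap n x).val = fun i => if i = n then (-1 : ℤ) else 0 :=
        rmap_sum n x hxD.2
      have hnegX : inX (fun i => if i = n then (-1 : ℤ) else 0) := by
        intro i
        by_cases h : i = n <;> simp [h]
      have hmem : x.val + (rmap n x).val ∈ S := by
        refine hS.2.1 x.val (rmap n x).val (inX_of_Y x) (inX_of_Y _) ?_ hxS hx2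
        rw [hsum]; exact hnegX
      rw [hsum] at hmem
      refine lastneg_not_mem hS hnegX (k := n) (by simp) ?_ hmem
      intro m' hm'
      simp [Nat.ne_of_gt hm']
    have hmk : IsMeagre (e ⁻¹' ((e ⁻¹' D) ∩ {y : Y | y.val ∈ S})) := hm.mono key
    have heq : (e ⁻¹' D) ∩ {y : Y | y.val ∈ S}
        = e ⁻¹' (e ⁻¹' ((e ⁻¹' D) ∩ {y : Y | y.val ∈ S})) := by
      ext x
      simp only [Set.mem_preimage, einv x]
    rw [heq]
    exact meagre_preimage e hmk

lemma flip_meager {S : Set (ℕ → ℤ)} (hS : IsPositivitySet S) {W : Set Y} (hW : IsOpen W)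
    (hne : W.Nonempty) (hm : IsMeagre (W ∩ {y : Y | y.val ∈ S})) :
    ∃ V : Set Y, IsOpen V ∧ V.Nonempty ∧ IsMeagre (V \ {y : Y | y.val ∈ S}) := by
  obtain ⟨y, hy⟩ := hne
  obtain ⟨n, hcyl⟩ := open_contains_cyl hW hy
  set u := y.val with hu
  let e : Y ≃ₜ Y := mkInv (smap n) (continuous_cmap _ _) (smap_invol n)
  have einv : ∀ z : Y, e (e z) = z := smap_invol n
  set D : Set Y := Cyl u n ∩ {x : Y | x.val n ≠ -1} with hD
  have hDopen : IsOpen D := by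
    refine (Cyl_clopen u n).isOpen.inter ?_
    have : ({x : Y | x.val n ≠ -1}) = (fun x : Y => x.val n) ⁻¹' {t : ℤ | t ≠ -1} := rfl
    rw [this]
    exact (isOpen_discrete _).preimage ((continuous_apply n).comp continuous_subtype_val)
  have hDne : D.Nonempty := by
    refine ⟨⟨fun i => if i < n then u i else 1, ?_⟩, ?_, ?_⟩
    · intro k
      by_cases h : k < n
      · simpa [h] using y.2 k
      · simp [h]
    · intro i hi
      simp [hi]
    · show (if n < n then u n else 1) ≠ -1
      simp
  refine ⟨e ⁻¹' D, hDopen.preimage e.continuous, ?_, ?_⟩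
  · obtain ⟨d, hd⟩ := hDne
    exact ⟨e d, by simpa [Set.mem_preimage, einv d] using hd⟩
  · have key : e ⁻¹' ((e ⁻¹' D) \ {y : Y | y.val ∈ S}) ⊆ W ∩ {y : Y | y.val ∈ S} := by
      intro x hx
      obtain ⟨hx1, hx2⟩ := hx
      have hxD : x ∈ D := by
        rw [Set.mem_preimage] at hx1
        rwa [einv x] at hx1
      refine ⟨hcyl hxD.1, ?_⟩
      by_contra hxS
      have hsum : x.val + (smap n x).val = fun i => if i = n then (1 : ℤ) else 0 :=
        smap_sum n x hxD.2
      have hposX : inX (fun i => if i = n then (1 : ℤ) else 0) := by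
        intro i
        by_cases h : i = n <;> simp [h]
      have hnmem : x.val + (smap n x).val ∉ S := by
        refine hS.2.2.1 x.val (smap n x).val (inX_of_Y x) (inX_of_Y _) ?_ hxS hx2
        rw [hsum]; exact hposX
      rw [hsum] at hnmem
      refine hnmem (lastpos_mem hS hposX (k := n) (by simp) ?_)
      intro m' hm'
      simp [Nat.ne_of_gt hm']
    have hmk : IsMeagre (e ⁻¹' ((e ⁻¹' D) \ {y : Y | y.val ∈ S})) := hm.mono key
    have heq : (e ⁻¹' D) \ {y : Y | y.val ∈ S}
        = e ⁻¹' (e ⁻¹' ((e ⁻¹' D) \ {y : Y | y.val ∈ S})) := by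
      ext x
      simp only [Set.mem_preimage, einv x]
    rw [heq]
    exact meagre_preimage e hmk

/-- If `S ⊆ {-2,-1,0,1,2}^ℕ` is a positivity set, then `S' = S ∩ {-1,0,1}^ℕ` does not
have the Baire property in the Cantor space `{-1,0,1}^ℕ`. -/
theorem positivity_set_restriction_not_baire (S : Set (ℕ → ℤ)) (hS : IsPositivitySet S) :
    ¬ ∃ U : Set Y, IsOpen U ∧ IsMeagre (symmDiff {y : Y | y.val ∈ S} U) := by
  rintro ⟨U, hU, hM⟩
  -- First, obtain both a region where `S'` is meager and one where it is comeager.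
  have hpair : (∃ V : Set Y, IsOpen V ∧ V.Nonempty ∧ IsMeagre (V ∩ {y : Y | y.val ∈ S})) ∧
      (∃ W : Set Y, IsOpen W ∧ W.Nonempty ∧ IsMeagre (W \ {y : Y | y.val ∈ S})) := by
    rcases eq_empty_or_nonempty U with hUe | hUn
    · have hSm : IsMeagre ({y : Y | y.val ∈ S}) := by
        rw [hUe, ← Set.bot_eq_empty, symmDiff_bot] at hM
        exact hM
      have hV : IsMeagre ((univ : Set Y) ∩ {y : Y | y.val ∈ S}) := by
        rw [Set.univ_inter]; exact hSm
      have hW : IsMeagre ((univ : Set Y) ∩ {y : Y | y.val ∈ S}) := hV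
      exact ⟨⟨univ, isOpen_univ, univ_nonempty, hV⟩,
        flip_meager hS isOpen_univ univ_nonempty hW⟩
    · have hW : IsMeagre (U \ {y : Y | y.val ∈ S}) := by
        refine hM.mono ?_
        rw [Set.symmDiff_def]
        exact Set.subset_union_right
      exact ⟨flip_comeager hS hU hUn hW, ⟨U, hU, hUn, hW⟩⟩
  obtain ⟨⟨V, hVo, hVne, hVm⟩, ⟨W, hWo, hWne, hWm⟩⟩ := hpair
  -- Extract cylinders.
  obtain ⟨yW, hyW⟩ := hWne
  obtain ⟨n, hbW⟩ := open_contains_cyl hWo hyW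
  set u := yW.val with huq
  have hum : IsMeagre (Cyl u n \ {y : Y | y.val ∈ S}) :=
    hWm.mono (Set.diff_subset_diff_left hbW)
  obtain ⟨yV, hyV⟩ := hVne
  obtain ⟨m, hbV⟩ := open_contains_cyl hVo hyV
  set v := yV.val with hvq
  have hvm : IsMeagre (Cyl v m ∩ {y : Y | y.val ∈ S}) :=
    hVm.mono (Set.inter_subset_inter_left _ hbV)
  -- Build the comparison cylinders.
  set N := max n m with hN
  set L := N + 2 with hL
  set c : ℕ → ℤ := fun i => if i < n then u i else 0 with hc
  set v' : ℕ → ℤ := fun i => if i = N + 1 then 1 else if i < m then v i else 0 with hv'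
  have hcr : ∀ i, c i = -1 ∨ c i = 0 ∨ c i = 1 := by
    intro i
    by_cases h : i < n
    · simpa [hc, h] using yW.2 i
    · simp [hc, h]
  have hvr : ∀ i, v' i = -1 ∨ v' i = 0 ∨ v' i = 1 := by
    intro i
    by_cases h : i = N + 1
    · simp [hv', h]
    · by_cases h2 : i < m
      · simpa [hv', h, h2] using yV.2 i
      · simp [hv', h, h2]
  set z : ℕ → ℤ := fun i => v' i - c i with hz
  have hcN : c (N + 1) = 0 := by
    have : ¬ (N + 1 < n) := by omega
    simp [hc, this]
  have hvN : v' (N + 1) = 1 := by simp [hv']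
  have hz1 : z (N + 1) = 1 := by
    simp [hz, hcN, hvN]
  have hz2 : ∀ m', N + 1 < m' → z m' = 0 := by
    intro m' hm'
    have h1 : ¬ (m' < n) := by omega
    have h2 : ¬ (m' < m) := by omega
    have h3 : m' ≠ N + 1 := by omega
    simp [hz, hc, hv', h1, h2, h3]
  have hzX : inX z := by
    intro i
    have h1 := hcr i
    have h2 := hvr i
    show v' i - c i = -2 ∨ v' i - c i = -1 ∨ v' i - c i = 0 ∨ v' i - c i = 1 ∨ v' i - c i = 2
    omega
  have hzS : z ∈ S := lastpos_mem hS hzX (k := N + 1) (by omega) hz2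
  have hne' : ¬ ∀ i, i < L → v' i = c i := by
    intro h
    have := h (N + 1) (by omega)
    rw [hcN, hvN] at this
    omega
  let e : Y ≃ₜ Y := mkInv (prefSwap c v' L hcr hvr) (continuous_prefSwap c v' L hcr hvr)
    (prefSwap_invol c v' L hcr hvr hne')
  -- Key inclusion.
  have key : Cyl c L ∩ {y : Y | y.val ∈ S} ⊆ e ⁻¹' (Cyl v' L ∩ {y : Y | y.val ∈ S}) := by
    intro x hx
    obtain ⟨hx1, hx2⟩ := hx
    have hex : e x = substPre v' L hvr x := prefSwap_of_mem c v' L hcr hvr x hx1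
    rw [Set.mem_preimage, hex]
    refine ⟨substPre_mem_Cyl v' L hvr x, ?_⟩
    show (substPre v' L hvr x).val ∈ S
    have hval : (substPre v' L hvr x).val = x.val + z := by
      funext i
      show (if i < L then v' i else x.val i) = x.val i + z i
      by_cases h : i < L
      · rw [if_pos h, hx1 i h]
        show v' i = c i + (v' i - c i)
        ring
      · rw [if_neg h]
        have h0 : z i = 0 := hz2 i (by omega)
        rw [h0, add_zero]
    rw [hval]
    refine hS.2.1 x.val z (inX_of_Y x) hzX ?_ hx2 hzS
    rw [← hval]
    exact inX_of_Y _
  -- The cylinder `Cyl c L` is meager, contradiction.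
  have hsub1 : Cyl v' L ∩ {y : Y | y.val ∈ S} ⊆ Cyl v m ∩ {y : Y | y.val ∈ S} := by
    refine Set.inter_subset_inter_left _ ?_
    intro x hx i hi
    have h1 : i < L := by omega
    have h2 : i ≠ N + 1 := by omega
    rw [hx i h1]
    simp [hv', h2, hi]
  have hmc1 : IsMeagre (Cyl c L ∩ {y : Y | y.val ∈ S}) :=
    (meagre_preimage e (hvm.mono hsub1)).mono key
  have hsub2 : Cyl c L \ {y : Y | y.val ∈ S} ⊆ Cyl u n \ {y : Y | y.val ∈ S} := by
    refine Set.diff_subset_diff_left ?_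
    intro x hx i hi
    have h1 : i < L := by omega
    rw [hx i h1]
    simp [hc, hi]
  have hmc2 : IsMeagre (Cyl c L \ {y : Y | y.val ∈ S}) := hum.mono hsub2
  have hcyl_meagre : IsMeagre (Cyl c L) := by
    rw [← Set.inter_union_diff (Cyl c L) {y : Y | y.val ∈ S}]
    exact meagre_union hmc1 hmc2
  exact not_meagre_open (Cyl_clopen c L).isOpen
    (Cyl_nonempty c L (fun i _ => hcr i)) hcyl_meagre
end

section
/- Let V be a linearly ordered field extending ℝ with a positive infinite element θ (i.e., θ > n for all n ∈ ℕ). Let ρ : {-2,-1,0,1,2}^ℕ → (ℝ → ℝ) send ξ to the entire function x ↦ Σ_{n≥0} ξ_n x^n / n!, and suppose L is a linear functional from the ℝ-span of the image of ρ to V such that for every real polynomial P in this span, L(P) = P(θ). Then S = {ξ : L(ρ(ξ)) > 0} is a positivity set in {-2,-1,0,1,2}^ℕ. -/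
/-- `ρ` sends `ξ` to the entire function `x ↦ Σ_{n≥0} ξ_n x^n / n!` (restricted to ℝ). -/
noncomputable def rho (ξ : ℕ → ℤ) : ℝ → ℝ :=
  fun x => ∑' n : ℕ, (ξ n : ℝ) * x ^ n / (n.factorial : ℝ)

lemma summable_aux (ξ : ℕ → ℤ) (h : inX ξ) (t : ℝ) :
    Summable (fun n => (ξ n : ℝ) * t ^ n / (n.factorial : ℝ)) := by
  refine Summable.of_norm_bounded (g := fun n => 2 * (|t| ^ n / (n.factorial : ℝ)))
    ((Real.summable_pow_div_factorial |t|).mul_left 2) (fun n => ?_)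
  have h2 : |(ξ n : ℝ)| ≤ 2 := by rcases h n with h|h|h|h|h <;> rw [h] <;> norm_num
  have : ‖(ξ n : ℝ) * t ^ n / (n.factorial : ℝ)‖
      = |(ξ n : ℝ)| * (|t| ^ n / (n.factorial : ℝ)) := by
    rw [norm_div, norm_mul, Real.norm_eq_abs, Real.norm_eq_abs, Real.norm_eq_abs, abs_pow,
      Nat.abs_cast, mul_div_assoc]
  rw [this]
  exact mul_le_mul_of_nonneg_right h2 (by positivity)

lemma rho_mem (ξ : ℕ → ℤ) (h : inX ξ) : rho ξ ∈ Submodule.span ℝ (rho '' {x | inX x}) :=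
  Submodule.subset_span ⟨ξ, h, rfl⟩

lemma rho_add (x y : ℕ → ℤ) (hx : inX x) (hy : inX y) : rho (x + y) = rho x + rho y := by
  funext t
  have hsx := summable_aux x hx t
  have hsy := summable_aux y hy t
  simp only [rho, Pi.add_apply]
  rw [← Summable.tsum_add hsx hsy]
  congr 1; funext n
  push_cast
  ring

lemma rho_eq_poly (ξ : ℕ → ℤ) (d : ℕ) (hd : ∀ m, d < m → ξ m = 0) :
    rho ξ = fun t => Polynomial.eval t
      (∑ n ∈ Finset.range (d+1), Polynomial.monomial n ((ξ n : ℝ) / (n.factorial : ℝ))) := by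
  funext t
  simp only [rho, Polynomial.eval_finset_sum, Polynomial.eval_monomial]
  rw [tsum_eq_sum (s := Finset.range (d+1)) (f := fun n => (ξ n : ℝ) * t ^ n / (n.factorial : ℝ))]
  · exact Finset.sum_congr rfl (fun n _ => by ring)
  · intro n hn
    have h' : ¬ n < d + 1 := fun h => hn (Finset.mem_range.mpr h)
    rw [hd n (by omega)]
    simp

lemma lt_theta {V : Type*} [Field V] [LinearOrder V] [IsStrictOrderedRing V] (i : ℝ →+* V) (hi : StrictMono i)
    (θ : V) (hθ : ∀ n : ℕ, (n : V) < θ) (r : ℝ) : i r < θ := by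
  obtain ⟨n, hn⟩ := exists_nat_gt r
  calc i r < i n := hi hn
    _ = (n : V) := map_natCast i n
    _ < θ := hθ n

lemma sum_pos_of_lead_pos {V : Type*} [Field V] [LinearOrder V] [IsStrictOrderedRing V] (i : ℝ →+* V) (hi : StrictMono i)
    (θ : V) (hθ : ∀ n : ℕ, (n : V) < θ) (a : ℕ → ℝ) (d : ℕ) (ha : 0 < a d) :
    0 < ∑ k ∈ Finset.range (d+1), i (a k) * θ ^ k := by
  have θpos : (0 : V) < θ := by have := hθ 0; simpa using this
  have θ1 : (1 : V) ≤ θ := by have := hθ 1; simpa using this.le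
  have hipos : 0 < i (a d) := by
    have := hi ha; rwa [map_zero] at this
  rcases Nat.eq_zero_or_pos d with rfl | hdpos
  · simpa using hipos
  obtain ⟨e, rfl⟩ : ∃ e, d = e + 1 := ⟨d - 1, by omega⟩
  set C : ℝ := ∑ k ∈ Finset.range (e+1), |a k| with hC
  have key : ∀ k ∈ Finset.range (e+1), -(i |a k|) * θ ^ e ≤ i (a k) * θ ^ k := by
    intro k hk
    have hk' : k ≤ e := Nat.lt_succ_iff.mp (Finset.mem_range.mp hk)
    have hθk : θ ^ k ≤ θ ^ e := pow_le_pow_right₀ θ1 hk'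
    have h1 : -(i |a k|) ≤ i (a k) := by
      have := hi.monotone (neg_abs_le (a k)); rwa [map_neg] at this
    have habs : 0 ≤ i |a k| := by
      have := hi.monotone (abs_nonneg (a k)); rwa [map_zero] at this
    rcases le_or_gt 0 (i (a k)) with h | h
    · have h2 : -(i |a k|) * θ ^ e ≤ 0 := by
        apply mul_nonpos_of_nonpos_of_nonneg (by linarith) (pow_pos θpos e).le
      exact h2.trans (mul_nonneg h (pow_pos θpos k).le)
    · calc -(i |a k|) * θ ^ e ≤ i (a k) * θ ^ e :=
            mul_le_mul_of_nonneg_right h1 (pow_pos θpos e).le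
        _ ≤ i (a k) * θ ^ k := mul_le_mul_of_nonpos_left hθk h.le
  have hsum : -(i C) * θ ^ e ≤ ∑ k ∈ Finset.range (e+1), i (a k) * θ ^ k := by
    have : -(i C) * θ ^ e = ∑ k ∈ Finset.range (e+1), -(i |a k|) * θ ^ e := by
      rw [hC, map_sum, ← Finset.sum_neg_distrib, Finset.sum_mul]
    rw [this]
    exact Finset.sum_le_sum key
  have hCθ : i C < i (a (e+1)) * θ := by
    have h1 : i (C / a (e+1)) < θ := lt_theta i hi θ hθ _
    have h2 : i (a (e+1)) * i (C / a (e+1)) < i (a (e+1)) * θ :=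
      mul_lt_mul_of_pos_left h1 hipos
    have h3 : i (a (e+1)) * i (C / a (e+1)) = i C := by
      rw [← map_mul]; congr 1; field_simp
    linarith [h2, h3.symm.le]
  rw [Finset.sum_range_succ]
  have hθe : (0:V) < θ ^ e := pow_pos θpos e
  have : i (a (e+1)) * θ ^ (e+1) = (i (a (e+1)) * θ) * θ ^ e := by ring
  nlinarith [hsum, hCθ, hθe]

/-- If `V` is an ordered field extending `ℝ`, `θ ∈ V` is positive infinite, and `L` is a
linear functional on the ℝ-span of the image of `ρ` with `L(P) = P(θ)` for polynomials `P`
in the span, then `S = {ξ : L(ρ(ξ)) > 0}` is a positivity set. -/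
theorem positivity_set_from_functional {V : Type*} [Field V] [LinearOrder V] [IsStrictOrderedRing V]
    (i : ℝ →+* V) (hi : StrictMono i) (θ : V) (hθ : ∀ n : ℕ, (n : V) < θ)
    (L : (ℝ → ℝ) → V)
    (hadd : ∀ f g : ℝ → ℝ, f ∈ Submodule.span ℝ (rho '' {x | inX x}) →
      g ∈ Submodule.span ℝ (rho '' {x | inX x}) → L (f + g) = L f + L g)
    (hsmul : ∀ (c : ℝ) (f : ℝ → ℝ), f ∈ Submodule.span ℝ (rho '' {x | inX x}) →
      L (c • f) = i c * L f)
    (hpoly : ∀ P : Polynomial ℝ,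
      (fun x => Polynomial.eval x P) ∈ Submodule.span ℝ (rho '' {x | inX x}) →
      L (fun x => Polynomial.eval x P) = Polynomial.eval₂ i θ P) :
    IsPositivitySet {ξ | inX ξ ∧ 0 < L (rho ξ)} := by
  refine ⟨fun ξ hξ => hξ.1, ?_, ?_, ?_⟩
  · intro x y hx hy hxy hxS hyS
    refine ⟨hxy, ?_⟩
    have h1 : L (rho (x + y)) = L (rho x) + L (rho y) := by
      rw [rho_add x y hx hy]
      exact hadd _ _ (rho_mem x hx) (rho_mem y hy)
    rw [h1]
    exact add_pos hxS.2 hyS.2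
  · intro x y hx hy hxy hxS hyS
    intro hmem
    have h1 : L (rho (x + y)) = L (rho x) + L (rho y) := by
      rw [rho_add x y hx hy]
      exact hadd _ _ (rho_mem x hx) (rho_mem y hy)
    have hx' : ¬ (0 < L (rho x)) := fun h => hxS ⟨hx, h⟩
    have hy' : ¬ (0 < L (rho y)) := fun h => hyS ⟨hy, h⟩
    have := hmem.2
    rw [h1] at this
    push_neg at hx' hy'
    linarith
  · intro ξ hξ hne hev
    obtain ⟨N, hN⟩ := hev
    obtain ⟨n0, hn0⟩ := hne
    -- find the last nonzero index d
    have hn0N : n0 ≤ N := by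
      by_contra h
      exact hn0 (hN n0 (by omega))
    set s : Finset ℕ := (Finset.range (N+1)).filter (fun n => ξ n ≠ 0) with hs
    have hsne : s.Nonempty := ⟨n0, by simp [hs, hn0, Nat.lt_succ_iff.mpr hn0N]⟩
    set d : ℕ := s.max' hsne with hdd
    have hdmem : ξ d ≠ 0 := (Finset.mem_filter.mp (s.max'_mem hsne)).2
    have hdz : ∀ m, d < m → ξ m = 0 := by
      intro m hm
      by_contra h
      have hmN : m ≤ N := by
        by_contra h2
        exact h (hN m (by omega))
      have : m ∈ s := Finset.mem_filter.mpr ⟨Finset.mem_range.mpr (by omega), h⟩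
      exact absurd (s.le_max' m this) (by omega)
    -- rho ξ is a polynomial
    set P : Polynomial ℝ :=
      ∑ n ∈ Finset.range (d+1), Polynomial.monomial n ((ξ n : ℝ) / (n.factorial : ℝ)) with hP
    have hrp : rho ξ = fun t => Polynomial.eval t P := rho_eq_poly ξ d hdz
    have hmem : (fun t => Polynomial.eval t P) ∈ Submodule.span ℝ (rho '' {x | inX x}) :=
      hrp ▸ rho_mem ξ hξ
    have hLval : L (rho ξ) = ∑ k ∈ Finset.range (d+1), i ((ξ k : ℝ) / (k.factorial : ℝ)) * θ ^ k := by
      rw [hrp, hpoly P hmem, hP]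
      rw [Polynomial.eval₂_finset_sum]
      exact Finset.sum_congr rfl (fun n _ => by rw [Polynomial.eval₂_monomial])
    set a : ℕ → ℝ := fun n => (ξ n : ℝ) / (n.factorial : ℝ) with ha
    constructor
    · rintro ⟨-, hpos⟩
      refine ⟨d, ?_, hdz⟩
      by_contra h
      have hξd : ξ d < 0 := by omega
      have had : 0 < -(a d) := by
        have h1 : (ξ d : ℝ) < 0 := by exact_mod_cast hξd
        have hf : (0:ℝ) < (d.factorial : ℝ) := by positivity
        have h2 : -(a d) = (-(ξ d : ℝ)) / (d.factorial : ℝ) := by simp [ha, neg_div]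
        rw [h2]
        exact div_pos (by linarith) hf
      have hneg := sum_pos_of_lead_pos i hi θ hθ (fun n => -(a n)) d had
      have heq : ∑ k ∈ Finset.range (d+1), i (-(a k)) * θ ^ k
          = -∑ k ∈ Finset.range (d+1), i (a k) * θ ^ k := by
        rw [← Finset.sum_neg_distrib]
        exact Finset.sum_congr rfl (fun n _ => by rw [map_neg]; ring)
      rw [heq] at hneg
      rw [hLval] at hpos
      simp only [ha] at hneg
      linarith
    · rintro ⟨n, hn1, hn2⟩
      have hnd : n = d := by
        rcases lt_trichotomy n d with h | h | h
        · exact absurd (hn2 d h) hdmem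
        · exact h
        · exact absurd (hdz n h) (by omega)
      rw [hnd] at hn1
      refine ⟨hξ, ?_⟩
      rw [hLval]
      have had : 0 < a d := by
        have h1 : (0:ℝ) < (ξ d : ℝ) := by exact_mod_cast hn1
        have hf : (0:ℝ) < (d.factorial : ℝ) := by positivity
        have h2 : a d = (ξ d : ℝ) / (d.factorial : ℝ) := rfl
        rw [h2]
        exact div_pos h1 hf
      exact sum_pos_of_lead_pos i hi θ hθ a d had
end

section
/- Let T ∈ ℓ^∞ → ℓ^∞ be the shift (Ts)_n = s_{n+1}, and let l_s, L_s be as above. Then for all x ≥ 0, |L_{Ts}(x) - L_s(x)| ≤ 2‖s‖_∞. -/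
noncomputable def linInterp (s : ℕ → ℝ) (x : ℝ) : ℝ :=
  if x ≤ 0 then 0
  else if x ≤ 1 then x * s 0
  else s (⌊x⌋₊ - 1) + (x - (⌊x⌋₊ : ℝ)) * (s ⌊x⌋₊ - s (⌊x⌋₊ - 1))

open MeasureTheory

lemma linInterp_abs_le (s : ℕ → ℝ) (M : ℝ) (hM : ∀ n, |s n| ≤ M) (t : ℝ) :
    |linInterp s t| ≤ M := by
  have hM0 : 0 ≤ M := (abs_nonneg _).trans (hM 0)
  unfold linInterp
  split_ifs with h0 h1
  · simpa using hM0
  · rw [abs_mul]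
    calc |t| * |s 0| ≤ 1 * M := by
          apply mul_le_mul _ (hM 0) (abs_nonneg _) zero_le_one
          rw [abs_le]; constructor <;> linarith
      _ = M := one_mul M
  · push_neg at h0 h1
    set k := ⌊t⌋₊ with hk
    have hθ0 : 0 ≤ t - (k : ℝ) := by
      have := Nat.floor_le (le_of_lt h0); linarith
    have hθ1 : t - (k : ℝ) ≤ 1 := by
      have := Nat.lt_floor_add_one t; linarith
    set θ := t - (k : ℝ)
    have : s (k - 1) + θ * (s k - s (k - 1)) = (1 - θ) * s (k - 1) + θ * s k := by ring
    rw [this]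
    calc |(1 - θ) * s (k - 1) + θ * s k| ≤ |(1 - θ) * s (k - 1)| + |θ * s k| := abs_add_le _ _
      _ = (1 - θ) * |s (k - 1)| + θ * |s k| := by
          rw [abs_mul, abs_mul, abs_of_nonneg (by linarith), abs_of_nonneg hθ0]
      _ ≤ (1 - θ) * M + θ * M := by
          apply add_le_add <;> apply mul_le_mul_of_nonneg_left (hM _) (by linarith)
      _ = M := by ring

lemma linInterp_measurable (s : ℕ → ℝ) : Measurable (linInterp s) := by
  unfold linInterp
  have hfl : Measurable (fun x : ℝ => ⌊x⌋₊) := Nat.measurable_floor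
  have h1 : Measurable (fun x : ℝ => s (⌊x⌋₊ - 1)) :=
    (measurable_from_top (f := fun n : ℕ => s (n - 1))).comp hfl
  have h2 : Measurable (fun x : ℝ => s ⌊x⌋₊) :=
    (measurable_from_top (f := s)).comp hfl
  refine Measurable.ite (measurableSet_le measurable_id measurable_const) measurable_const ?_
  refine Measurable.ite (measurableSet_le measurable_id measurable_const) ?_ ?_
  · exact measurable_id.mul measurable_const
  · exact h1.add ((measurable_id.sub ((measurable_from_top
      (f := fun n : ℕ => (n : ℝ))).comp hfl)).mul (h2.sub h1))

lemma linInterp_intervalIntegrable (s : ℕ → ℝ) (M : ℝ) (hM : ∀ n, |s n| ≤ M)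
    (a b : ℝ) : IntervalIntegrable (linInterp s) volume a b := by
  rw [intervalIntegrable_iff]
  have hfin : IsFiniteMeasure (volume.restrict (Set.uIoc a b)) := by
    constructor
    rw [Measure.restrict_apply_univ]
    exact measure_Ioc_lt_top
  refine ⟨((linInterp_measurable s).aestronglyMeasurable).restrict, ?_⟩
  exact HasFiniteIntegral.of_bounded (C := M)
    (Filter.Eventually.of_forall fun t => by
      simpa [Real.norm_eq_abs] using linInterp_abs_le s M hM t)

lemma linInterp_shift (s : ℕ → ℝ) (t : ℝ) (ht : 1 ≤ t) :
    linInterp (fun n => s (n + 1)) t = linInterp s (t + 1) := by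
  unfold linInterp
  have ht0 : ¬ t ≤ 0 := by linarith
  have ht0' : ¬ t + 1 ≤ 0 := by linarith
  have ht1' : ¬ t + 1 ≤ 1 := by linarith
  rcases eq_or_lt_of_le ht with h | h
  · rw [← h]
    norm_num
  · have h1 : ¬ t ≤ 1 := not_le.mpr h
    have hk1 : 1 ≤ ⌊t⌋₊ := Nat.le_floor (by exact_mod_cast ht)
    have hfl : ⌊t + 1⌋₊ = ⌊t⌋₊ + 1 := Nat.floor_add_one (by linarith)
    rw [if_neg ht0, if_neg h1, if_neg ht0', if_neg ht1', hfl]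
    have h2 : ⌊t⌋₊ + 1 - 1 = ⌊t⌋₊ := rfl
    have h3 : ⌊t⌋₊ - 1 + 1 = ⌊t⌋₊ := Nat.succ_pred_eq_of_pos hk1
    simp only [h2, h3]
    push_cast
    ring

lemma linInterp_eq_on_unit (s : ℕ → ℝ) (t : ℝ) (h0 : 0 ≤ t) (h1 : t ≤ 1) :
    linInterp s t = t * s 0 := by
  unfold linInterp
  rcases lt_or_eq_of_le h0 with h | h
  · rw [if_neg (by linarith), if_pos h1]
  · rw [← h, if_pos le_rfl]
    simp

lemma linInterp_eq_on_one_two (s : ℕ → ℝ) (t : ℝ) (h1 : 1 ≤ t) (h2 : t ≤ 2) :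
    linInterp s t = s 0 + (t - 1) * (s 1 - s 0) := by
  unfold linInterp
  split_ifs with ha hb
  · linarith
  · have : t = 1 := le_antisymm hb h1
    simp [this]
  · push_neg at hb
    rcases lt_or_eq_of_le h2 with h | h
    · have hfl : ⌊t⌋₊ = 1 := by
        rw [Nat.floor_eq_iff (by linarith)]
        constructor <;> [skip; skip] <;> push_cast <;> linarith
      simp [hfl]
    · subst h
      norm_num

lemma integral_linInterp_unit (s : ℕ → ℝ) :
    ∫ t in (0:ℝ)..1, linInterp s t = s 0 / 2 := by
  rw [intervalIntegral.integral_congr (g := fun t => t * s 0)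
    (fun t ht => by
      rw [Set.uIcc_of_le (by norm_num : (0:ℝ) ≤ 1)] at ht
      exact linInterp_eq_on_unit s t ht.1 ht.2)]
  rw [intervalIntegral.integral_mul_const, integral_id]
  ring

lemma integral_linInterp_one_two (s : ℕ → ℝ) :
    ∫ t in (1:ℝ)..2, linInterp s t = s 0 + (s 1 - s 0) / 2 := by
  rw [intervalIntegral.integral_congr (g := fun t => s 0 + (t - 1) * (s 1 - s 0))
    (fun t ht => by
      rw [Set.uIcc_of_le (by norm_num : (1:ℝ) ≤ 2)] at ht
      exact linInterp_eq_on_one_two s t ht.1 ht.2)]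
  have : ∫ t in (1:ℝ)..2, (s 0 + (t - 1) * (s 1 - s 0)) =
      ∫ t in (0:ℝ)..1, (s 0 + t * (s 1 - s 0)) := by
    have h := intervalIntegral.integral_comp_sub_right (a := (1:ℝ)) (b := 2)
      (fun u => s 0 + u * (s 1 - s 0)) 1
    simp only [show (1:ℝ) - 1 = 0 by norm_num, show (2:ℝ) - 1 = 1 by norm_num] at h
    exact h
  rw [this, intervalIntegral.integral_add (f := fun _ => s 0) (g := fun t => t * (s 1 - s 0)) (intervalIntegrable_const)
    ((continuous_id'.mul continuous_const).intervalIntegrable _ _)]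
  rw [intervalIntegral.integral_const, intervalIntegral.integral_mul_const, integral_id]
  norm_num
  ring

/-- With `T` the shift `(Ts)_n = s_{n+1}` and `L_s(x) = ∫₀ˣ l_s`, for all `x ≥ 0`,
`|L_{Ts}(x) − L_s(x)| ≤ 2‖s‖_∞`. -/
theorem integral_linInterp_shift (s : ℕ → ℝ) (M : ℝ) (hM : ∀ n, |s n| ≤ M)
    (x : ℝ) (hx : 0 ≤ x) :
    |(∫ t in (0:ℝ)..x, linInterp (fun n => s (n + 1)) t) -
      ∫ t in (0:ℝ)..x, linInterp s t| ≤ 2 * M := by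
  have hM0 : 0 ≤ M := (abs_nonneg _).trans (hM 0)
  have habs01 : |s 1 - s 0| ≤ |s 1| + |s 0| := abs_sub _ _
  rcases le_or_gt x 1 with hx1 | hx1
  · -- x ≤ 1 : both integrands are linear on [0, x]
    have hA : (∫ t in (0:ℝ)..x, linInterp (fun n => s (n + 1)) t) = x ^ 2 / 2 * s 1 := by
      rw [intervalIntegral.integral_congr (g := fun t => t * s 1)
        (fun t ht => by
          rw [Set.uIcc_of_le hx] at ht
          exact linInterp_eq_on_unit _ t ht.1 (ht.2.trans hx1))]
      rw [intervalIntegral.integral_mul_const, integral_id]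
      ring
    have hB : (∫ t in (0:ℝ)..x, linInterp s t) = x ^ 2 / 2 * s 0 := by
      rw [intervalIntegral.integral_congr (g := fun t => t * s 0)
        (fun t ht => by
          rw [Set.uIcc_of_le hx] at ht
          exact linInterp_eq_on_unit _ t ht.1 (ht.2.trans hx1))]
      rw [intervalIntegral.integral_mul_const, integral_id]
      ring
    rw [hA, hB]
    have hx2 : x ^ 2 ≤ 1 := by nlinarith
    have : x ^ 2 / 2 * s 1 - x ^ 2 / 2 * s 0 = (x ^ 2 / 2) * (s 1 - s 0) := by ring
    rw [this, abs_mul, abs_of_nonneg (by positivity : (0:ℝ) ≤ x ^ 2 / 2)]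
    have h1 := hM 1
    have h0 := hM 0
    nlinarith [abs_nonneg (s 1 - s 0)]
  · -- 1 ≤ x
    have hx1' : (1:ℝ) ≤ x := le_of_lt hx1
    have hMT : ∀ n, |(fun n => s (n + 1)) n| ≤ M := fun n => hM (n + 1)
    have hIs : ∀ a b : ℝ, IntervalIntegrable (linInterp s) volume a b :=
      linInterp_intervalIntegrable s M hM
    have hIT : ∀ a b : ℝ, IntervalIntegrable (linInterp fun n => s (n + 1)) volume a b :=
      linInterp_intervalIntegrable _ M hMT
    -- split the shifted integral at 1
    have hT : (∫ t in (0:ℝ)..x, linInterp (fun n => s (n + 1)) t) =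
        s 1 / 2 + ∫ t in (2:ℝ)..(x + 1), linInterp s t := by
      rw [← intervalIntegral.integral_add_adjacent_intervals (hIT 0 1) (hIT 1 x)]
      congr 1
      · simpa using integral_linInterp_unit (fun n => s (n + 1))
      · rw [intervalIntegral.integral_congr (g := fun t => linInterp s (t + 1))
          (fun t ht => by
            rw [Set.uIcc_of_le hx1'] at ht
            exact linInterp_shift s t ht.1)]
        rw [intervalIntegral.integral_comp_add_right (linInterp s) 1]
        norm_num
    -- split ∫₀^{x+1} two ways
    have hsplit1 : (∫ t in (0:ℝ)..(x+1), linInterp s t) =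
        (∫ t in (0:ℝ)..2, linInterp s t) + ∫ t in (2:ℝ)..(x+1), linInterp s t :=
      (intervalIntegral.integral_add_adjacent_intervals (hIs 0 2) (hIs 2 (x+1))).symm
    have hsplit2 : (∫ t in (0:ℝ)..(x+1), linInterp s t) =
        (∫ t in (0:ℝ)..x, linInterp s t) + ∫ t in x..(x+1), linInterp s t :=
      (intervalIntegral.integral_add_adjacent_intervals (hIs 0 x) (hIs x (x+1))).symm
    have h02 : (∫ t in (0:ℝ)..2, linInterp s t) = s 0 + s 1 / 2 := by
      rw [← intervalIntegral.integral_add_adjacent_intervals (hIs 0 1) (hIs 1 2),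
        integral_linInterp_unit, integral_linInterp_one_two]
      ring
    -- the difference equals ∫ₓ^{x+1} l_s - s 0
    have hkey : (∫ t in (0:ℝ)..x, linInterp (fun n => s (n + 1)) t) -
        (∫ t in (0:ℝ)..x, linInterp s t) =
        (∫ t in x..(x+1), linInterp s t) - s 0 := by
      rw [hT]
      have : (∫ t in (2:ℝ)..(x+1), linInterp s t) =
          (∫ t in (0:ℝ)..x, linInterp s t) + (∫ t in x..(x+1), linInterp s t) -
            (s 0 + s 1 / 2) := by
        rw [← h02, ← hsplit2, hsplit1]; ring
      rw [this]; ring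
    rw [hkey]
    have hbound : |∫ t in x..(x+1), linInterp s t| ≤ M := by
      have := intervalIntegral.norm_integral_le_of_norm_le_const (C := M)
        (f := linInterp s) (a := x) (b := x + 1)
        (fun t _ => by simpa [Real.norm_eq_abs] using linInterp_abs_le s M hM t)
      simpa [Real.norm_eq_abs] using this
    calc |(∫ t in x..(x+1), linInterp s t) - s 0| ≤
        |∫ t in x..(x+1), linInterp s t| + |s 0| := abs_sub _ _
      _ ≤ M + M := add_le_add hbound (hM 0)
      _ = 2 * M := by ring
end

section
/- For each n ∈ ℤ⁺ let f_n(z) = n e^{-z}(1 - e^{-z/n}). Then f_n is entire, ‖f_n‖ < 2 in the norm ‖f‖ = sup_{z∈ℂ}|e^{-2|z|}f(z)| + sup_{x∈ℝ⁺}|e^{x/2}f(x)|, and ‖n^{-1} f_n‖ → 0 as n → ∞. -/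
open scoped Nat

-- key: |exp w - 1| ≤ exp |w| - 1
lemma abs_exp_sub_one_le' (w : ℂ) :
    ‖Complex.exp w - 1‖ ≤ Real.exp (‖w‖) - 1 := by
  set t : ℝ := ‖w‖ with ht
  have hsC : Summable fun n : ℕ => ‖((n ! : ℂ))⁻¹ • w ^ n‖ :=
    NormedSpace.norm_expSeries_summable' w
  have hsC' : Summable fun n : ℕ => ((n ! : ℂ))⁻¹ • w ^ n := hsC.of_norm
  have hsR : Summable fun n : ℕ => ((n ! : ℝ))⁻¹ • t ^ n :=
    (NormedSpace.norm_expSeries_summable' t).of_norm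
  have hC : Complex.exp w = ∑' n : ℕ, ((n ! : ℂ))⁻¹ • w ^ n := by
    rw [Complex.exp_eq_exp_ℂ, NormedSpace.exp_eq_tsum ℂ]
  have hR : Real.exp t = ∑' n : ℕ, ((n ! : ℝ))⁻¹ • t ^ n := by
    rw [Real.exp_eq_exp_ℝ, NormedSpace.exp_eq_tsum ℝ]
  have hnorm : ∀ n : ℕ, ‖((n ! : ℂ))⁻¹ • w ^ n‖ = ((n ! : ℝ))⁻¹ • t ^ n := by
    intro n
    simp [norm_smul, smul_eq_mul, ht, map_pow]
  rw [hC, Summable.tsum_eq_zero_add hsC', hR, Summable.tsum_eq_zero_add hsR]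
  simp only [pow_zero, Nat.factorial_zero, Nat.cast_one, inv_one, one_smul,
    add_sub_cancel_left]
  have hshiftC : Summable fun n : ℕ => ‖(((n + 1)! : ℂ))⁻¹ • w ^ (n + 1)‖ :=
    (summable_nat_add_iff 1).mpr hsC
  calc ‖∑' n : ℕ, (((n + 1)! : ℂ))⁻¹ • w ^ (n + 1)‖
      ≤ ∑' n : ℕ, ‖(((n + 1)! : ℂ))⁻¹ • w ^ (n + 1)‖ := by
        exact norm_tsum_le_tsum_norm hshiftC
    _ = ∑' n : ℕ, (((n + 1)! : ℝ))⁻¹ • t ^ (n + 1) := tsum_congr fun n => hnorm (n + 1)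

-- n(e^s - 1) ≤ e^{ns} - 1 for s ≥ 0
lemma nat_mul_exp_sub_one_le (s : ℝ) (hs : 0 ≤ s) (n : ℕ) :
    (n : ℝ) * (Real.exp s - 1) ≤ Real.exp (n * s) - 1 := by
  induction n with
  | zero => simp
  | succ k ih =>
    have h2 : Real.exp (((k : ℝ) + 1) * s) = Real.exp ((k : ℝ) * s) * Real.exp s := by
      rw [← Real.exp_add]; ring_nf
    have h3 : (1 : ℝ) ≤ Real.exp ((k : ℝ) * s) :=
      Real.one_le_exp (mul_nonneg (Nat.cast_nonneg k) hs)
    have h4 : (1 : ℝ) ≤ Real.exp s := Real.one_le_exp hs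
    push_cast
    nlinarith

lemma one_sub_exp_neg_le (s : ℝ) : 1 - Real.exp (-s) ≤ s := by
  nlinarith [Real.add_one_le_exp (-s)]

lemma exp_sub_one_le_mul (s : ℝ) : Real.exp s - 1 ≤ s * Real.exp s := by
  have h := Real.add_one_le_exp (-s)
  have h2 : Real.exp (-s) * Real.exp s = 1 := by rw [← Real.exp_add]; simp
  nlinarith [Real.exp_pos s, Real.exp_pos (-s)]

lemma xexp_le (x : ℝ) (hx : 0 ≤ x) : x * Real.exp (-(x / 2)) ≤ 2 / Real.exp 1 := by
  have h1 : Real.exp 1 * (x / 2) ≤ Real.exp (x / 2) := by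
    calc Real.exp 1 * (x / 2) = Real.exp 1 * ((x / 2 - 1) + 1) := by ring
      _ ≤ Real.exp 1 * Real.exp (x / 2 - 1) := by
          exact mul_le_mul_of_nonneg_left (Real.add_one_le_exp _) (Real.exp_pos 1).le
      _ = Real.exp (x / 2) := by rw [← Real.exp_add]; ring_nf
  have h2 : Real.exp (-(x / 2)) = (Real.exp (x / 2))⁻¹ := Real.exp_neg _
  rw [h2, mul_inv_le_iff₀' (Real.exp_pos _), mul_div_assoc', le_div_iff₀ (Real.exp_pos 1)]
  nlinarith

lemma abs_exp_neg_le (z : ℂ) : ‖Complex.exp (-z)‖ ≤ Real.exp (‖z‖) := by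
  rw [Complex.norm_exp]
  apply Real.exp_le_exp.mpr
  simpa using (neg_le_abs z.re).trans (Complex.abs_re_le_norm z)

lemma abs_one_sub_exp_le (n : ℕ) (hn : 1 ≤ n) (z : ℂ) :
    ‖1 - Complex.exp (-z / (n : ℂ))‖ ≤
      Real.exp (‖z‖ / n) - 1 := by
  have hrw : (1 - Complex.exp (-z / (n : ℂ))) = -(Complex.exp (-z / (n : ℂ)) - 1) := by ring
  have habs : ‖-z / (n : ℂ)‖ = ‖z‖ / n := by
    rw [norm_div, norm_neg]
    simp
  rw [hrw, norm_neg]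
  calc ‖Complex.exp (-z / (n : ℂ)) - 1‖
      ≤ Real.exp (‖-z / (n : ℂ)‖) - 1 := abs_exp_sub_one_le' _
    _ = Real.exp (‖z‖ / n) - 1 := by rw [habs]

-- f_n on reals is real
lemma fn_real (n : ℕ) (x : ℝ) :
    (n : ℂ) * Complex.exp (-(x : ℂ)) * (1 - Complex.exp (-(x : ℂ) / (n : ℂ)))
      = ((n * Real.exp (-x) * (1 - Real.exp (-x / n)) : ℝ) : ℂ) := by
  push_cast [Complex.ofReal_exp]
  ring

lemma gn_real (n : ℕ) (x : ℝ) :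
    Complex.exp (-(x : ℂ)) * (1 - Complex.exp (-(x : ℂ) / (n : ℂ)))
      = ((Real.exp (-x) * (1 - Real.exp (-x / n)) : ℝ) : ℂ) := by
  push_cast [Complex.ofReal_exp]
  ring

lemma bound1 (n : ℕ) (hn : 1 ≤ n) (z : ℂ) :
    Real.exp (-2 * ‖z‖) *
      ‖(n : ℂ) * Complex.exp (-z) * (1 - Complex.exp (-z / (n : ℂ)))‖ ≤ 1 := by
  set t : ℝ := ‖z‖ with htdef
  have ht : 0 ≤ t := norm_nonneg z
  have hn0 : (n : ℝ) ≠ 0 := Nat.cast_ne_zero.mpr (by omega)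
  have h1 := abs_exp_neg_le z
  have h2 := abs_one_sub_exp_le n hn z
  have h3 : (n : ℝ) * (Real.exp (t / n) - 1) ≤ Real.exp t - 1 := by
    have h := nat_mul_exp_sub_one_le (t / n) (by positivity) n
    have he : (n : ℝ) * (t / n) = t := by field_simp
    rwa [he] at h
  have hB : (n : ℝ) * ‖1 - Complex.exp (-z / (n : ℂ))‖ ≤ Real.exp t - 1 :=
    le_trans (mul_le_mul_of_nonneg_left h2 (Nat.cast_nonneg n)) h3
  have hA : ‖Complex.exp (-z)‖ *
      ((n : ℝ) * ‖1 - Complex.exp (-z / (n : ℂ))‖) ≤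
      Real.exp t * (Real.exp t - 1) :=
    mul_le_mul h1 hB (by positivity) (Real.exp_pos t).le
  calc Real.exp (-2 * t) *
      ‖(n : ℂ) * Complex.exp (-z) * (1 - Complex.exp (-z / (n : ℂ)))‖
      = Real.exp (-2 * t) * (‖Complex.exp (-z)‖ *
          ((n : ℝ) * ‖1 - Complex.exp (-z / (n : ℂ))‖)) := by
        rw [norm_mul, norm_mul, Complex.norm_natCast]; ring
    _ ≤ Real.exp (-2 * t) * (Real.exp t * (Real.exp t - 1)) :=
        mul_le_mul_of_nonneg_left hA (Real.exp_pos _).le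
    _ ≤ 1 := by
        have hE : Real.exp (-2 * t) * (Real.exp t * Real.exp t) = 1 := by
          rw [← Real.exp_add, ← Real.exp_add, show -2 * t + (t + t) = (0:ℝ) by ring,
            Real.exp_zero]
        nlinarith [Real.exp_pos (-2 * t), Real.exp_pos t]

lemma bound2 (n : ℕ) (hn : 1 ≤ n) (x : ℝ) (hx : 0 < x) :
    Real.exp (x / 2) *
      ‖(n : ℂ) * Complex.exp (-(x : ℂ)) * (1 - Complex.exp (-(x : ℂ) / (n : ℂ)))‖ ≤
      2 / Real.exp 1 := by
  have hn0 : (n : ℝ) ≠ 0 := Nat.cast_ne_zero.mpr (by omega)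
  rw [fn_real, Complex.norm_real, Real.norm_eq_abs]
  have h0 : 0 ≤ 1 - Real.exp (-x / n) := by
    have hxn : (0:ℝ) ≤ x / n := by positivity
    have : Real.exp (-x / n) ≤ 1 := by
      rw [neg_div]; exact Real.exp_le_one_iff.mpr (neg_nonpos_of_nonneg hxn)
    linarith
  have hval : 0 ≤ (n : ℝ) * Real.exp (-x) * (1 - Real.exp (-x / n)) := by positivity
  rw [abs_of_nonneg hval]
  have h1 : (n : ℝ) * (1 - Real.exp (-x / n)) ≤ x := by
    calc (n : ℝ) * (1 - Real.exp (-x / n)) = n * (1 - Real.exp (-(x / n))) := by rw [neg_div]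
      _ ≤ n * (x / n) := mul_le_mul_of_nonneg_left (one_sub_exp_neg_le _) (Nat.cast_nonneg n)
      _ = x := by field_simp
  calc Real.exp (x / 2) * ((n : ℝ) * Real.exp (-x) * (1 - Real.exp (-x / n)))
      = ((n : ℝ) * (1 - Real.exp (-x / n))) * (Real.exp (x / 2) * Real.exp (-x)) := by ring
    _ ≤ x * Real.exp (-(x / 2)) := by
        have he : Real.exp (x / 2) * Real.exp (-x) = Real.exp (-(x / 2)) := by
          rw [← Real.exp_add]; ring_nf
        rw [he]
        exact mul_le_mul_of_nonneg_right h1 (Real.exp_pos _).le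
    _ ≤ 2 / Real.exp 1 := xexp_le x hx.le

lemma bound1' (n : ℕ) (hn : 2 ≤ n) (z : ℂ) :
    Real.exp (-2 * ‖z‖) *
      ‖Complex.exp (-z) * (1 - Complex.exp (-z / (n : ℂ)))‖ ≤
      (2 / Real.exp 1) / n := by
  set t : ℝ := ‖z‖ with htdef
  have ht : 0 ≤ t := norm_nonneg z
  have hn1 : 1 ≤ n := le_trans one_le_two hn
  have hn0 : (0 : ℝ) < n := Nat.cast_pos.mpr (by omega)
  have h1 := abs_exp_neg_le z
  have h2 := abs_one_sub_exp_le n hn1 z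
  have h3 : Real.exp (t / n) - 1 ≤ (t / n) * Real.exp (t / 2) := by
    refine (exp_sub_one_le_mul (t / n)).trans ?_
    have hdiv : t / n ≤ t / 2 := by
      apply div_le_div_of_nonneg_left ht two_pos
      exact_mod_cast hn
    exact mul_le_mul_of_nonneg_left (Real.exp_le_exp.mpr hdiv) (by positivity)
  have hA : ‖Complex.exp (-z)‖ * ‖1 - Complex.exp (-z / (n : ℂ))‖ ≤
      Real.exp t * ((t / n) * Real.exp (t / 2)) :=
    mul_le_mul h1 (h2.trans h3) (norm_nonneg _) (Real.exp_pos t).le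
  calc Real.exp (-2 * t) * ‖Complex.exp (-z) * (1 - Complex.exp (-z / (n : ℂ)))‖
      = Real.exp (-2 * t) *
          (‖Complex.exp (-z)‖ * ‖1 - Complex.exp (-z / (n : ℂ))‖) := by
        rw [norm_mul]
    _ ≤ Real.exp (-2 * t) * (Real.exp t * ((t / n) * Real.exp (t / 2))) :=
        mul_le_mul_of_nonneg_left hA (Real.exp_pos _).le
    _ = (t / n) * (Real.exp (-2 * t) * (Real.exp t * Real.exp (t / 2))) := by ring
    _ = (t * Real.exp (-(t / 2))) / n := by
        have he : Real.exp (-2 * t) * (Real.exp t * Real.exp (t / 2)) = Real.exp (-(t / 2)) := by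
          rw [← Real.exp_add, ← Real.exp_add]; ring_nf
        rw [he]; ring
    _ ≤ (2 / Real.exp 1) / n := by
        gcongr
        exact xexp_le t ht
    
lemma bound2' (n : ℕ) (hn : 1 ≤ n) (x : ℝ) (hx : 0 < x) :
    Real.exp (x / 2) *
      ‖Complex.exp (-(x : ℂ)) * (1 - Complex.exp (-(x : ℂ) / (n : ℂ)))‖ ≤
      (2 / Real.exp 1) / n := by
  have hn0 : (0 : ℝ) < n := Nat.cast_pos.mpr (by omega)
  rw [gn_real, Complex.norm_real, Real.norm_eq_abs]
  have h0 : 0 ≤ 1 - Real.exp (-x / n) := by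
    have hxn : (0:ℝ) ≤ x / n := by positivity
    have : Real.exp (-x / n) ≤ 1 := by
      rw [neg_div]; exact Real.exp_le_one_iff.mpr (neg_nonpos_of_nonneg hxn)
    linarith
  rw [abs_of_nonneg (by positivity)]
  have h1 : 1 - Real.exp (-x / n) ≤ x / n := by
    rw [neg_div]; exact one_sub_exp_neg_le _
  calc Real.exp (x / 2) * (Real.exp (-x) * (1 - Real.exp (-x / n)))
      = (1 - Real.exp (-x / n)) * (Real.exp (x / 2) * Real.exp (-x)) := by ring
    _ ≤ (x / n) * Real.exp (-(x / 2)) := by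
        have he : Real.exp (x / 2) * Real.exp (-x) = Real.exp (-(x / 2)) := by
          rw [← Real.exp_add]; ring_nf
        rw [he]
        exact mul_le_mul_of_nonneg_right h1 (Real.exp_pos _).le
    _ = (x * Real.exp (-(x / 2))) / n := by ring
    _ ≤ (2 / Real.exp 1) / n := by
        gcongr
        exact xexp_le x hx.le
noncomputable def e1Norm (f : ℂ → ℂ) : ℝ :=
  sSup (Set.range fun z : ℂ => Real.exp (-2 * ‖z‖) * ‖f z‖) +
  sSup (Set.range fun x : {x : ℝ // 0 < x} => Real.exp (x.1 / 2) * ‖f x.1‖)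

def MemE1 (f : ℂ → ℂ) : Prop :=
  Differentiable ℂ f ∧ (∀ x : ℝ, (f x).im = 0) ∧
  BddAbove (Set.range fun z : ℂ => Real.exp (-2 * ‖z‖) * ‖f z‖) ∧
  BddAbove (Set.range fun x : {x : ℝ // 0 < x} => Real.exp (x.1 / 2) * ‖f x.1‖)

/-- `f_n(z) = n e^{-z}(1 - e^{-z/n})` is entire with `‖f_n‖ < 2`, and `‖n⁻¹ f_n‖ → 0`. -/
theorem fn_properties :
    (∀ n : ℕ, 1 ≤ n →
      MemE1 (fun z : ℂ => (n : ℂ) * Complex.exp (-z) * (1 - Complex.exp (-z / (n : ℂ)))) ∧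
      e1Norm (fun z : ℂ => (n : ℂ) * Complex.exp (-z) * (1 - Complex.exp (-z / (n : ℂ)))) < 2) ∧
    Filter.Tendsto
      (fun n : ℕ => e1Norm (fun z : ℂ => Complex.exp (-z) * (1 - Complex.exp (-z / (n : ℂ)))))
      Filter.atTop (nhds 0) := by
  constructor
  · intro n hn
    have hb1 : ∀ y ∈ Set.range (fun z : ℂ => Real.exp (-2 * ‖z‖) *
        ‖(n : ℂ) * Complex.exp (-z) * (1 - Complex.exp (-z / (n : ℂ)))‖), y ≤ 1 := by
      rintro y ⟨z, rfl⟩; exact bound1 n hn z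
    have hb2 : ∀ y ∈ Set.range (fun x : {x : ℝ // 0 < x} => Real.exp (x.1 / 2) *
        ‖(n : ℂ) * Complex.exp (-(x.1 : ℂ)) *
          (1 - Complex.exp (-(x.1 : ℂ) / (n : ℂ)))‖), y ≤ 2 / Real.exp 1 := by
      rintro y ⟨⟨x, hx⟩, rfl⟩; exact bound2 n hn x hx
    have hdiff : Differentiable ℂ
        (fun z : ℂ => (n : ℂ) * Complex.exp (-z) * (1 - Complex.exp (-z / (n : ℂ)))) := by
      fun_prop
    refine ⟨⟨hdiff, ?_, ⟨1, hb1⟩, ⟨2 / Real.exp 1, hb2⟩⟩, ?_⟩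
    · intro x
      simp only [fn_real, Complex.ofReal_im]
    · have hS1 := Real.sSup_le hb1 zero_le_one
      have hS2 := Real.sSup_le hb2 (by positivity)
      have he : 2 / Real.exp 1 < 1 := by
        rw [div_lt_one (Real.exp_pos 1)]
        have := Real.exp_one_gt_d9; linarith
      unfold e1Norm
      linarith
  · have htend : Filter.Tendsto (fun n : ℕ => 4 / Real.exp 1 / n) Filter.atTop (nhds 0) :=
      tendsto_const_div_atTop_nhds_zero_nat _
    refine tendsto_of_tendsto_of_tendsto_of_le_of_le' tendsto_const_nhds htend ?_ ?_
    · refine Filter.Eventually.of_forall fun n => ?_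
      unfold e1Norm
      apply add_nonneg <;>
        · apply Real.sSup_nonneg
          rintro y ⟨z, rfl⟩
          exact mul_nonneg (Real.exp_pos _).le (norm_nonneg _)
    · filter_upwards [Filter.eventually_ge_atTop 2] with n hn
      have hn1 : 1 ≤ n := le_trans one_le_two hn
      have hS1 := Real.sSup_le (s := Set.range fun z : ℂ => Real.exp (-2 * ‖z‖) *
          ‖Complex.exp (-z) * (1 - Complex.exp (-z / (n : ℂ)))‖)
        (by rintro y ⟨z, rfl⟩; exact bound1' n hn z) (by positivity)
      have hS2 := Real.sSup_le (s := Set.range fun x : {x : ℝ // 0 < x} =>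
          Real.exp (x.1 / 2) * ‖Complex.exp (-(x.1 : ℂ)) *
            (1 - Complex.exp (-(x.1 : ℂ) / (n : ℂ)))‖)
        (by rintro y ⟨⟨x, hx⟩, rfl⟩; exact bound2' n hn1 x hx) (by positivity)
      unfold e1Norm
      have : 2 / Real.exp 1 / n + 2 / Real.exp 1 / n = 4 / Real.exp 1 / n := by ring
      linarith
end
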